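/- arXiv:1409.1466 — 6 statements merged into one kernel-verified Lean document; each statement's English description precedes it below -/
import Mathlib

section
/- If a graph G admits simplicial vertices x₁,…,x_k such that the closed neighborhoods N[x₁],…,N[x_k] partition V(G), then every minimal dominating set of G has exactly k vertices; in particular G is well-dominated. -/
/-- `S` is a dominating set of `G`: every vertex is in `S` or adjacent to a vertex of `S`. -/
def Dominates {V : Type*} (G : SimpleGraph V) (S : Finset V) : Prop :=
  ∀ v : V, v ∈ S ∨ ∃ u ∈ S, G.Adj u v

/-- `S` is a minimal dominating set of `G`. -/
def IsMinDomSet {V : Type*} (G : SimpleGraph V) (S : Finset V) : Prop :=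
  Dominates G S ∧ ∀ T : Finset V, T ⊂ S → ¬ Dominates G T

/-- `S` is an independent set of `G`. -/
def IsIndepSet {V : Type*} (G : SimpleGraph V) (S : Finset V) : Prop :=
  ∀ u ∈ S, ∀ v ∈ S, ¬ G.Adj u v

/-- `S` is a maximal independent set of `G`. -/
def IsMaxIndepSet {V : Type*} (G : SimpleGraph V) (S : Finset V) : Prop :=
  IsIndepSet G S ∧ ∀ T : Finset V, IsIndepSet G T → S ⊆ T → S = T

/-- The closed neighborhood of a vertex. -/
def closedNbhd {V : Type*} (G : SimpleGraph V) (x : V) : Set V :=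
  {u | u = x ∨ G.Adj x u}

/-- `x` is a simplicial vertex: its closed neighborhood is a clique. -/
def Simplicial {V : Type*} (G : SimpleGraph V) (x : V) : Prop :=
  ∀ u ∈ closedNbhd G x, ∀ v ∈ closedNbhd G x, u ≠ v → G.Adj u v

/-- If the closed neighborhoods of simplicial vertices `x 0, …, x (k-1)` partition `V(G)`,
then every minimal dominating set has exactly `k` vertices; in particular `G` is
well-dominated. -/
theorem minDomSet_card_eq_of_simplicial_partition {V : Type*} [Fintype V] [DecidableEq V]
    (G : SimpleGraph V) (k : ℕ) (x : Fin k → V)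
    (hsimp : ∀ i, Simplicial G (x i))
    (hpart : ∀ v : V, ∃! i : Fin k, v ∈ closedNbhd G (x i)) :
    (∀ S : Finset V, IsMinDomSet G S → S.card = k) ∧
    (∀ S T : Finset V, IsMinDomSet G S → IsMinDomSet G T → S.card = T.card) := by
  classical
  have key : ∀ S : Finset V, IsMinDomSet G S → S.card = k := by
    intro S hS
    obtain ⟨hdom, hmin⟩ := hS
    -- every vertex of S has a private neighbor
    have priv : ∀ u ∈ S, ∃ p, (p = u ∨ G.Adj u p) ∧
        ∀ s ∈ S, (p = s ∨ G.Adj s p) → s = u := by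
      intro u hu
      have hsub : S.erase u ⊂ S := Finset.erase_ssubset hu
      have hnd := hmin _ hsub
      rw [Dominates] at hnd
      push_neg at hnd
      obtain ⟨p, hp1, hp2⟩ := hnd
      refine ⟨p, ?_, ?_⟩
      · rcases hdom p with h | ⟨s, hs, hadj⟩
        · left
          by_contra hne
          exact hp1 (Finset.mem_erase.mpr ⟨hne, h⟩)
        · right
          have hsu : s = u := by
            by_contra hne
            exact hp2 s (Finset.mem_erase.mpr ⟨hne, hs⟩) hadj
          rwa [hsu] at hadj
      · intro s hs h
        by_contra hne
        have hse : s ∈ S.erase u := Finset.mem_erase.mpr ⟨hne, hs⟩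
        rcases h with h | h
        · exact hp1 (by rw [h]; exact hse)
        · exact hp2 s hse h
    -- each part contains a vertex of S
    have exists_mem : ∀ i : Fin k, ∃ s ∈ S, s ∈ closedNbhd G (x i) := by
      intro i
      rcases hdom (x i) with h | ⟨s, hs, hadj⟩
      · exact ⟨x i, h, Or.inl rfl⟩
      · exact ⟨s, hs, Or.inr hadj.symm⟩
    -- each part contains at most one vertex of S
    have uniq_mem : ∀ i : Fin k, ∀ u ∈ S, ∀ v ∈ S,
        u ∈ closedNbhd G (x i) → v ∈ closedNbhd G (x i) → u = v := by
      intro i u hu v hv hui hvi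
      by_contra hne
      obtain ⟨p, hpN, hpriv⟩ := priv u hu
      obtain ⟨j, hj, _⟩ := hpart p
      obtain ⟨s, hsS, hsj⟩ := exists_mem j
      have hsu : s = u := by
        apply hpriv s hsS
        by_cases hsp : s = p
        · exact Or.inl hsp.symm
        · exact Or.inr (hsimp j s hsj p hj hsp)
      -- so u ∈ N[x j] and u ∈ N[x i], hence i = j
      have huj : u ∈ closedNbhd G (x j) := hsu ▸ hsj
      obtain ⟨i', hi', huniq⟩ := hpart u
      have hij : i = j := by rw [huniq i hui, huniq j huj]
      have hpi : p ∈ closedNbhd G (x i) := hij ▸ hj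
      -- v also dominates p, so v = u, contradiction
      have hvu : v = u := by
        apply hpriv v hv
        by_cases hvp : v = p
        · exact Or.inl hvp.symm
        · exact Or.inr (hsimp i v hvi p hpi hvp)
      exact hne (hvu ▸ rfl)
    -- build the bijection
    have := Finset.card_bij (s := S) (t := (Finset.univ : Finset (Fin k)))
      (fun a _ => (hpart a).choose)
      (fun a ha => Finset.mem_univ _)
      (fun a ha b hb hab => by
        have h1 := (hpart a).choose_spec.1
        have h2 := (hpart b).choose_spec.1
        dsimp only at hab
        rw [hab] at h1
        exact uniq_mem _ a ha b hb h1 h2)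
      (fun i _ => by
        obtain ⟨s, hs, hsi⟩ := exists_mem i
        exact ⟨s, hs, ((hpart s).choose_spec.2 i hsi).symm⟩)
    rw [this, Finset.card_univ, Fintype.card_fin]
  exact ⟨key, fun S T hS hT => by rw [key S hS, key T hT]⟩
end

section
/- If a graph G admits simplicial vertices x₁,…,x_k whose closed neighborhoods partition V(G), then every minimal dominating set of G intersects each closed neighborhood N[x_i] in exactly one vertex. -/
/-- If the closed neighborhoods of simplicial vertices partition `V(G)`, then every
minimal dominating set meets each closed neighborhood in exactly one vertex. -/
theorem minDomSet_meets_each_nbhd_once {V : Type*} [Fintype V] [DecidableEq V]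
    (G : SimpleGraph V) (k : ℕ) (x : Fin k → V)
    (hsimp : ∀ i, Simplicial G (x i))
    (hpart : ∀ v : V, ∃! i : Fin k, v ∈ closedNbhd G (x i)) :
    ∀ S : Finset V, IsMinDomSet G S →
      ∀ i : Fin k, ∃! u : V, u ∈ S ∧ u ∈ closedNbhd G (x i) := by
  intro S hS i
  obtain ⟨hdom, hmin⟩ := hS
  have hex : ∀ j : Fin k, ∃ s, s ∈ S ∧ s ∈ closedNbhd G (x j) := by
    intro j
    rcases hdom (x j) with h | ⟨u, hu, hadj⟩
    · exact ⟨x j, h, Or.inl rfl⟩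
    · exact ⟨u, hu, Or.inr hadj.symm⟩
  have huniq : ∀ u v, u ∈ S → u ∈ closedNbhd G (x i) → v ∈ S →
      v ∈ closedNbhd G (x i) → u = v := by
    intro u v hu huN hv hvN
    by_contra hne
    apply hmin (S.erase u) (Finset.erase_ssubset hu)
    intro w
    obtain ⟨j, hwj, _⟩ := hpart w
    by_cases hij : j = i
    · subst hij
      by_cases hwv : w = v
      · subst hwv
        exact Or.inl (Finset.mem_erase.mpr ⟨Ne.symm hne, hv⟩)
      · exact Or.inr ⟨v, Finset.mem_erase.mpr ⟨Ne.symm hne, hv⟩,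
          hsimp j v hvN w hwj (fun h => hwv h.symm)⟩
    · obtain ⟨s, hs, hsN⟩ := hex j
      have hsu : s ≠ u := by
        rintro rfl
        obtain ⟨j', _, hj'⟩ := hpart s
        exact hij ((hj' _ hsN).trans (hj' _ huN).symm)
      by_cases hws : w = s
      · subst hws
        exact Or.inl (Finset.mem_erase.mpr ⟨hsu, hs⟩)
      · exact Or.inr ⟨s, Finset.mem_erase.mpr ⟨hsu, hs⟩,
          hsimp j s hsN w hwj (fun h => hws h.symm)⟩
  obtain ⟨s, hs, hsN⟩ := hex i
  exact ⟨s, ⟨hs, hsN⟩, fun y hy => huniq y s hy.1 hy.2 hs hsN⟩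
end

section
/- For the 7-cycle C₇ and a weight function w : V(C₇) → ℝ, C₇ is w-well-dominated if and only if w is constant; in that case every minimal dominating set has weight 3k where w ≡ k. -/
instance {V : Type*} [Fintype V] [DecidableEq V] (G : SimpleGraph V) [DecidableRel G.Adj]
    (S : Finset V) : Decidable (Dominates G S) := by unfold Dominates; infer_instance

instance {V : Type*} [Fintype V] [DecidableEq V] (G : SimpleGraph V) [DecidableRel G.Adj]
    (S : Finset V) : Decidable (IsMinDomSet G S) := by unfold IsMinDomSet; infer_instance

set_option maxRecDepth 10000 in
lemma c7_mds_card : ∀ S : Finset (Fin 7), IsMinDomSet (SimpleGraph.cycleGraph 7) S →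
    S.card = 3 := by decide

set_option maxRecDepth 10000 in
lemma c7_mds_examples : ∀ i : Fin 7,
    IsMinDomSet (SimpleGraph.cycleGraph 7) {i, i + 2, i + 4} ∧
    IsMinDomSet (SimpleGraph.cycleGraph 7) {i, i + 2, i + 5} := by decide

lemma c7_sum3 (w : Fin 7 → ℝ) (i a b : Fin 7) (h1 : i ≠ a) (h2 : i ≠ b) (h3 : a ≠ b) :
    (∑ v ∈ ({i, a, b} : Finset (Fin 7)), w v) = w i + w a + w b := by
  rw [Finset.sum_insert (by simp [h1, h2]), Finset.sum_insert (by simp [h3]),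
    Finset.sum_singleton, add_assoc]

/-- `C₇` is `w`-well-dominated iff `w` is constant, in which case every minimal
dominating set has weight `3k` where `w ≡ k`. -/
theorem c7_wwd_iff_const (w : Fin 7 → ℝ) :
    ((∀ S T : Finset (Fin 7), IsMinDomSet (SimpleGraph.cycleGraph 7) S →
        IsMinDomSet (SimpleGraph.cycleGraph 7) T → (∑ v ∈ S, w v) = (∑ v ∈ T, w v)) ↔
      (∃ k : ℝ, ∀ v, w v = k)) ∧
    (∀ k : ℝ, (∀ v, w v = k) →
      ∀ S : Finset (Fin 7), IsMinDomSet (SimpleGraph.cycleGraph 7) S →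
        (∑ v ∈ S, w v) = 3 * k) := by
  constructor
  · constructor
    · intro h
      refine ⟨w 0, ?_⟩
      have key : ∀ j : Fin 7, w j = w (j + 1) := by
        intro j
        have := h {j - 4, j - 4 + 2, j - 4 + 4} {j - 4, j - 4 + 2, j - 4 + 5}
          (c7_mds_examples (j - 4)).1 (c7_mds_examples (j - 4)).2
        rw [c7_sum3 w _ _ _ (by omega) (by omega) (by omega),
          c7_sum3 w _ _ _ (by omega) (by omega) (by omega)] at this
        have h4 : j - 4 + 4 = j := by omega
        have h5 : j - 4 + 5 = j + 1 := by omega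
        rw [h4, h5] at this
        linarith
      intro v
      fin_cases v
      · rfl
      · exact (key 0).symm
      · exact ((key 0).trans (key 1)).symm
      · exact ((key 0).trans ((key 1).trans (key 2))).symm
      · exact ((key 0).trans ((key 1).trans ((key 2).trans (key 3)))).symm
      · exact ((key 0).trans ((key 1).trans ((key 2).trans ((key 3).trans (key 4))))).symm
      · exact ((key 0).trans ((key 1).trans ((key 2).trans ((key 3).trans ((key 4).trans (key 5)))))).symm
    · rintro ⟨k, hk⟩ S T hS hT
      have : ∀ U : Finset (Fin 7), IsMinDomSet (SimpleGraph.cycleGraph 7) U →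
          (∑ v ∈ U, w v) = 3 * k := by
        intro U hU
        rw [Finset.sum_congr rfl (fun v _ => hk v), Finset.sum_const, c7_mds_card U hU]
        ring
      rw [this S hS, this T hT]
  · intro k hk S hS
    rw [Finset.sum_congr rfl (fun v _ => hk v), Finset.sum_const, c7_mds_card S hS]
    ring
end

section
/- Let G consist of three vertex-disjoint 5-cycles (x₁,…,x₅), (y₁,…,y₅), (z₁,…,z₅) together with the additional triangle edges x₁y₁, y₁z₁, z₁x₁. Then G is well-covered with every maximal independent set of size 6, but G is not well-dominated, since {x₁,x₂,x₅,y₃,y₄,z₃,z₄} is a minimal dominating set of size 7 while there exists a minimal dominating set of size 6. -/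
/-- Three disjoint 5-cycles whose first vertices form a triangle. Vertex `(g, i)` is the
`i`-th vertex of the `g`-th 5-cycle; `x₁ = (0,0)`, `y₁ = (1,0)`, `z₁ = (2,0)`. -/
def threeCycleGraph : SimpleGraph (Fin 3 × ZMod 5) :=
  SimpleGraph.fromRel (fun a b =>
    (a.1 = b.1 ∧ b.2 = a.2 + 1) ∨ (a.1 ≠ b.1 ∧ a.2 = 0 ∧ b.2 = 0))

/-! ### Auxiliary machinery -/

instance : DecidableRel threeCycleGraph.Adj := fun a b => by
  unfold threeCycleGraph; rw [SimpleGraph.fromRel_adj]; infer_instance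

instance {V : Type*} [DecidableEq V] (G : SimpleGraph V) [DecidableRel G.Adj]
    (S : Finset V) : Decidable (IsIndepSet G S) := by unfold IsIndepSet; infer_instance

lemma dominates_mono {V : Type*} {G : SimpleGraph V} {S T : Finset V} (h : S ⊆ T)
    (hS : Dominates G S) : Dominates G T := by
  intro v
  rcases hS v with hv | ⟨u, hu, ha⟩
  · exact .inl (h hv)
  · exact .inr ⟨u, h hu, ha⟩

lemma isMinDomSet_of_erase {V : Type*} [DecidableEq V] {G : SimpleGraph V} {S : Finset V}
    (hdom : Dominates G S) (h : ∀ v ∈ S, ¬ Dominates G (S.erase v)) : IsMinDomSet G S := by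
  refine ⟨hdom, fun T hT hdT => ?_⟩
  obtain ⟨v, hvS, hvT⟩ := Finset.exists_of_ssubset hT
  exact h v hvS (dominates_mono
    (fun x hx => Finset.mem_erase.mpr ⟨fun e => hvT (e ▸ hx), hT.1 hx⟩) hdT)

lemma isMinDomSet_of_indep {V : Type*} {G : SimpleGraph V} {S : Finset V}
    (hi : IsIndepSet G S) (hd : Dominates G S) : IsMinDomSet G S := by
  refine ⟨hd, fun T hT hdT => ?_⟩
  obtain ⟨v, hvS, hvT⟩ := Finset.exists_of_ssubset hT
  rcases hdT v with h | ⟨u, huT, ha⟩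
  · exact hvT h
  · exact hi u (hT.1 huT) v hvS ha

lemma maxIndep_dominates {V : Type*} [DecidableEq V] {G : SimpleGraph V} {S : Finset V}
    (h : IsMaxIndepSet G S) : Dominates G S := by
  intro v
  by_contra hc
  push_neg at hc
  obtain ⟨hv, hn⟩ := hc
  have hind : IsIndepSet G (insert v S) := by
    intro a ha b hb
    rcases Finset.mem_insert.mp ha with ha' | ha' <;>
      rcases Finset.mem_insert.mp hb with hb' | hb'
    · subst ha'; subst hb'; exact G.loopless.irrefl _
    · subst ha'; exact fun hadj => hn b hb' hadj.symm
    · subst hb'; exact fun hadj => hn a ha' hadj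
    · exact h.1 a ha' b hb'
  have heq := h.2 _ hind (Finset.subset_insert v S)
  exact hv (heq ▸ Finset.mem_insert_self v S)

/-- The 5-cycle on `ZMod 5`. -/
def cyc5 : SimpleGraph (ZMod 5) := SimpleGraph.fromRel (fun a b => b = a + 1)

instance : DecidableRel cyc5.Adj := fun a b => by
  unfold cyc5; rw [SimpleGraph.fromRel_adj]; infer_instance

lemma adj_iff : ∀ u v : Fin 3 × ZMod 5, threeCycleGraph.Adj u v ↔
    ((u.1 = v.1 ∧ cyc5.Adj u.2 v.2) ∨ (u.1 ≠ v.1 ∧ u.2 = 0 ∧ v.2 = 0)) := by decide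

/-- Key per-cycle fact: an independent set in `C₅` dominating all four non-hub vertices
has exactly two elements. -/
lemma cyc5_key : ∀ A : Finset (ZMod 5), IsIndepSet cyc5 A →
    (∀ i : ZMod 5, i ≠ 0 → i ∈ A ∨ ∃ j ∈ A, cyc5.Adj j i) → A.card = 2 := by decide

lemma mem_slice (S : Finset (Fin 3 × ZMod 5)) (g : Fin 3) (i : ZMod 5) :
    i ∈ (S.filter (fun p => p.1 = g)).image Prod.snd ↔ (g, i) ∈ S := by
  simp only [Finset.mem_image, Finset.mem_filter]
  constructor
  · rintro ⟨p, ⟨hp, h1⟩, h2⟩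
    have : p = (g, i) := Prod.ext h1 h2
    exact this ▸ hp
  · intro h
    exact ⟨(g, i), ⟨h, rfl⟩, rfl⟩

lemma slice_card (S : Finset (Fin 3 × ZMod 5)) (hm : IsMaxIndepSet threeCycleGraph S)
    (g : Fin 3) : (S.filter (fun p => p.1 = g)).card = 2 := by
  have hd : Dominates threeCycleGraph S := maxIndep_dominates hm
  set A := (S.filter (fun p => p.1 = g)).image Prod.snd with hA
  have hcard : (S.filter (fun p => p.1 = g)).card = A.card := by
    rw [hA]
    refine (Finset.card_image_of_injOn ?_).symm
    intro p hp q hq hpq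
    have hp1 := (Finset.mem_filter.mp hp).2
    have hq1 := (Finset.mem_filter.mp hq).2
    exact Prod.ext (hp1.trans hq1.symm) hpq
  rw [hcard]
  refine cyc5_key A ?_ ?_
  · intro i hi j hj hadj
    have hiS : (g, i) ∈ S := (mem_slice S g i).mp hi
    have hjS : (g, j) ∈ S := (mem_slice S g j).mp hj
    exact hm.1 _ hiS _ hjS ((adj_iff (g, i) (g, j)).mpr (.inl ⟨rfl, hadj⟩))
  · intro i hi
    rcases hd (g, i) with h | ⟨u, hu, hadj⟩
    · exact .inl ((mem_slice S g i).mpr h)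
    · rcases (adj_iff u (g, i)).mp hadj with ⟨h1, h2⟩ | ⟨_, _, h0⟩
      · refine .inr ⟨u.2, (mem_slice S g u.2).mpr ?_, h2⟩
        have : u = (g, u.2) := Prod.ext h1 rfl
        exact this ▸ hu
      · exact absurd h0 hi

lemma wellCovered : ∀ S : Finset (Fin 3 × ZMod 5),
    IsMaxIndepSet threeCycleGraph S → S.card = 6 := by
  intro S hm
  have hsum : S.card = ∑ g : Fin 3, (S.filter (fun p => p.1 = g)).card :=
    Finset.card_eq_sum_card_fiberwise (fun x _ => Finset.mem_univ x.1)
  rw [hsum, Fin.sum_univ_three, slice_card S hm 0, slice_card S hm 1, slice_card S hm 2]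

/-- The graph of three disjoint 5-cycles joined by a triangle is well-covered (all maximal
independent sets have 6 vertices), but not well-dominated: `{x₁,x₂,x₅,y₃,y₄,z₃,z₄}` is a
minimal dominating set of size 7, while there is a minimal dominating set of size 6. -/
theorem threeCycleGraph_wellCovered_not_wellDominated :
    (∀ S : Finset (Fin 3 × ZMod 5), IsMaxIndepSet threeCycleGraph S → S.card = 6) ∧
    IsMinDomSet threeCycleGraph
      ({(0,0),(0,1),(0,4),(1,2),(1,3),(2,2),(2,3)} : Finset (Fin 3 × ZMod 5)) ∧
    ({(0,0),(0,1),(0,4),(1,2),(1,3),(2,2),(2,3)} : Finset (Fin 3 × ZMod 5)).card = 7 ∧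
    (∃ S : Finset (Fin 3 × ZMod 5), IsMinDomSet threeCycleGraph S ∧ S.card = 6) := by
  refine ⟨wellCovered, ?_, by decide, ?_⟩
  · refine isMinDomSet_of_erase (by decide) (by decide)
  · refine ⟨({(0,0),(0,2),(1,2),(1,4),(2,2),(2,4)} : Finset (Fin 3 × ZMod 5)),
      isMinDomSet_of_indep (by decide) (by decide), by decide⟩
end

section
/- If a graph G has a vertex v of degree 2 lying on a triangle (v, v₁, v₂), and there exists a maximal independent set S of G − N₂[v] dominating neither N(v₁) ∩ N₂(v) nor N(v₂) ∩ N₂(v), then for every weight function w making G w-well-dominated it holds that w(v) = 0. -/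
/-- The closed second neighborhood: vertices at distance at most 2 from `v`. -/
def N2closed {V : Type*} (G : SimpleGraph V) (v : V) : Set V :=
  {u | u = v ∨ G.Adj v u ∨ ∃ x, G.Adj v x ∧ G.Adj x u}

/-- The set of vertices at distance exactly 2 from `v`. -/
def N2open {V : Type*} (G : SimpleGraph V) (v : V) : Set V :=
  {u | (∃ x, G.Adj v x ∧ G.Adj x u) ∧ u ≠ v ∧ ¬ G.Adj v u}

/-- The closed neighborhood (as a set) of a finite set `A`. -/
def closedNbhdSet {V : Type*} (G : SimpleGraph V) (A : Finset V) : Set V :=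
  {u | u ∈ A ∨ ∃ a ∈ A, G.Adj a u}

/-- `G` contains a (not necessarily induced) cycle of length `n`. -/
def HasCycleOfLength {V : Type*} (G : SimpleGraph V) (n : ℕ) : Prop :=
  ∃ f : ZMod n → V, Function.Injective f ∧ ∀ i : ZMod n, G.Adj (f i) (f (i + 1))

/-- An independent dominating set is a minimal dominating set. -/
lemma aux_indep_dom_min {V : Type*} (G : SimpleGraph V) (D : Finset V)
    (hind : IsIndepSet G D) (hdom : Dominates G D) : IsMinDomSet G D := by
  refine ⟨hdom, ?_⟩
  intro T hT hTdom
  obtain ⟨x, hxD, hxT⟩ := Finset.exists_of_ssubset hT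
  rcases hTdom x with hx | ⟨u, huT, hu⟩
  · exact hxT hx
  · exact hind u (hT.subset huT) x hxD hu

lemma aux_c4 {V : Type*} {G : SimpleGraph V} (hC4 : ¬ HasCycleOfLength G 4)
    {a b c d : V} (h1 : G.Adj a b) (h2 : G.Adj b c) (h3 : G.Adj c d) (h4 : G.Adj d a)
    (hac : a ≠ c) (hbd : b ≠ d) : False := by
  apply hC4
  refine ⟨![a,b,c,d], ?_, ?_⟩
  · intro i j hij
    fin_cases i <;> fin_cases j <;>
      simp_all [h1.ne, h2.ne, h3.ne, h1.ne', h2.ne', h3.ne', h4.ne, h4.ne',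
        hac, hbd, Ne.symm hac, Ne.symm hbd] <;> rfl
  · intro i
    fin_cases i <;> simp <;> assumption

/-- Suppose `G` (with no cycles of lengths 4, 5, 6) has a degree-2 vertex `v` on a triangle
`(v, v₁, v₂)`, and there is a maximal independent set `S` of `G − N₂[v]` dominating neither
`N(v₁) ∩ N₂(v)` nor `N(v₂) ∩ N₂(v)`. If `G` is `w`-well-dominated then `w v = 0`. -/
theorem weight_zero_of_undominated_triangle {V : Type*} [Fintype V]
    (G : SimpleGraph V) (v v₁ v₂ : V)
    (hC4 : ¬ HasCycleOfLength G 4) (hC5 : ¬ HasCycleOfLength G 5)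
    (hC6 : ¬ HasCycleOfLength G 6)
    (hdeg : G.neighborSet v = {v₁, v₂}) (htri : G.Adj v₁ v₂)
    (S : Finset V)
    (hSdisj : ∀ s ∈ S, s ∉ N2closed G v)
    (hSindep : IsIndepSet G S)
    (hSmax : ∀ T : Finset V, IsIndepSet G T → (∀ t ∈ T, t ∉ N2closed G v) → S ⊆ T → S = T)
    (hnd1 : ¬ (G.neighborSet v₁ ∩ N2open G v ⊆ closedNbhdSet G S))
    (hnd2 : ¬ (G.neighborSet v₂ ∩ N2open G v ⊆ closedNbhdSet G S))
    (w : V → ℝ)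
    (hwwd : ∀ S T : Finset V, IsMinDomSet G S → IsMinDomSet G T →
      (∑ u ∈ S, w u) = (∑ u ∈ T, w u)) :
    w v = 0 := by
  classical
  -- basic adjacency facts
  have hvv1 : G.Adj v v₁ := by
    have h : v₁ ∈ G.neighborSet v := by rw [hdeg]; exact Set.mem_insert _ _
    exact h
  have hvv2 : G.Adj v v₂ := by
    have h : v₂ ∈ G.neighborSet v := by rw [hdeg]; exact Set.mem_insert_of_mem _ rfl
    exact h
  have hNv : ∀ x, G.Adj v x → x = v₁ ∨ x = v₂ := by
    intro x hx
    have h : x ∈ ({v₁, v₂} : Set V) := by rw [← hdeg]; exact hx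
    simpa using h
  -- facts about S
  have hS_nadj_v1 : ∀ s ∈ S, ¬ G.Adj v₁ s := by
    intro s hs h
    exact hSdisj s hs (Or.inr (Or.inr ⟨v₁, hvv1, h⟩))
  have hS_nadj_v2 : ∀ s ∈ S, ¬ G.Adj v₂ s := by
    intro s hs h
    exact hSdisj s hs (Or.inr (Or.inr ⟨v₂, hvv2, h⟩))
  have hS_nadj_v : ∀ s ∈ S, ¬ G.Adj v s := by
    intro s hs h
    exact hSdisj s hs (Or.inr (Or.inl h))
  have hS_ne_v : ∀ s ∈ S, s ≠ v := by
    intro s hs h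
    exact hSdisj s hs (Or.inl h)
  have hv1_ne_v2 : v₁ ≠ v₂ := htri.ne
  -- S dominates everything outside N2closed
  have hSdom : ∀ x, x ∉ N2closed G v → x ∈ S ∨ ∃ s ∈ S, G.Adj s x := by
    intro x hx
    by_cases hxS : x ∈ S
    · exact Or.inl hxS
    right
    by_contra h
    push_neg at h
    have hind : IsIndepSet G (insert x S) := by
      intro a ha b hb hab
      rcases Finset.mem_insert.1 ha with ha' | ha' <;>
        rcases Finset.mem_insert.1 hb with hb' | hb'
      · subst ha'; subst hb'; exact G.irrefl hab
      · subst ha'; exact h b hb' hab.symm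
      · subst hb'; exact h a ha' hab
      · exact hSindep a ha' b hb' hab
    have hT : ∀ t ∈ insert x S, t ∉ N2closed G v := by
      intro t ht
      rcases Finset.mem_insert.1 ht with h' | h'
      · subst h'; exact hx
      · exact hSdisj t h'
    have := hSmax _ hind hT (Finset.subset_insert _ _)
    exact hxS (this ▸ Finset.mem_insert_self x S)
  -- the set A of undominated second-neighborhood vertices
  let A : Finset V := Finset.univ.filter (fun a => a ∈ N2open G v ∧ a ∉ closedNbhdSet G S)
  have hAmem : ∀ a, a ∈ A ↔ (a ∈ N2open G v ∧ a ∉ closedNbhdSet G S) := by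
    intro a; simp [A]
  -- facts about members of A
  have hA_nadj_v : ∀ a ∈ A, ¬ G.Adj v a := fun a ha => ((hAmem a).1 ha).1.2.2
  have hA_ne_v : ∀ a ∈ A, a ≠ v := fun a ha => ((hAmem a).1 ha).1.2.1
  have hA_nS : ∀ a ∈ A, a ∉ S := by
    intro a ha haS
    exact ((hAmem a).1 ha).2 (Or.inl haS)
  have hA_nadj_S : ∀ a ∈ A, ∀ s ∈ S, ¬ G.Adj s a := by
    intro a ha s hs h
    exact ((hAmem a).1 ha).2 (Or.inr ⟨s, hs, h⟩)
  have hA_adj : ∀ a ∈ A, G.Adj v₁ a ∨ G.Adj v₂ a := by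
    intro a ha
    obtain ⟨⟨x, hvx, hxa⟩, _, _⟩ := ((hAmem a).1 ha).1
    rcases hNv x hvx with h | h
    · left; exact h ▸ hxa
    · right; exact h ▸ hxa
  -- no vertex of N2open adjacent to both v₁ and v₂ (no C4)
  have hnotboth : ∀ a : V, a ≠ v → G.Adj v₁ a → G.Adj v₂ a → False := by
    intro a hav h1 h2
    exact aux_c4 hC4 hvv1 h1 h2.symm hvv2.symm (Ne.symm hav) hv1_ne_v2
  -- choose a maximal independent subset A' of A
  obtain ⟨A', hA'A, hA'ind, hA'max⟩ :
      ∃ A' : Finset V, A' ⊆ A ∧ IsIndepSet G A' ∧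
        ∀ a ∈ A, a ∉ A' → ∃ b ∈ A', G.Adj b a := by
    have hne : ((A.powerset).filter (fun B => IsIndepSet G B)).Nonempty := by
      refine ⟨∅, ?_⟩
      simp only [Finset.mem_filter, Finset.mem_powerset]
      exact ⟨Finset.empty_subset _, by intro x hx; simp at hx⟩
    obtain ⟨B, hB, hBmax⟩ := Finset.exists_max_image _ (fun B => B.card) hne
    simp only [Finset.mem_filter, Finset.mem_powerset] at hB
    refine ⟨B, hB.1, hB.2, ?_⟩
    intro a haA haB
    by_contra h
    push_neg at h
    have hind : IsIndepSet G (insert a B) := by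
      intro x hx y hy hxy
      rcases Finset.mem_insert.1 hx with hx' | hx' <;> rcases Finset.mem_insert.1 hy with hy' | hy'
      · subst hx'; subst hy'; exact G.irrefl hxy
      · subst hx'; exact h y hy' hxy.symm
      · subst hy'; exact h x hx' hxy
      · exact hB.2 x hx' y hy' hxy
    have hmem : insert a B ∈ (A.powerset).filter (fun B => IsIndepSet G B) := by
      simp only [Finset.mem_filter, Finset.mem_powerset]
      exact ⟨Finset.insert_subset haA hB.1, hind⟩
    have hle := hBmax _ hmem
    simp only [Finset.card_insert_of_notMem haB] at hle
    omega
  -- split A' according to adjacency with v₁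
  let A₁ : Finset V := A'.filter (fun a => G.Adj v₁ a)
  let A₂ : Finset V := A' \ A₁
  have hA1mem : ∀ a, a ∈ A₁ ↔ (a ∈ A' ∧ G.Adj v₁ a) := by intro a; simp [A₁]
  have hA2mem : ∀ a, a ∈ A₂ → a ∈ A' ∧ ¬ G.Adj v₁ a ∧ G.Adj v₂ a := by
    intro a ha
    have h1 : a ∈ A' := (Finset.mem_sdiff.1 ha).1
    have h2 : a ∉ A₁ := (Finset.mem_sdiff.1 ha).2
    have h3 : ¬ G.Adj v₁ a := fun h => h2 ((hA1mem a).2 ⟨h1, h⟩)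
    rcases hA_adj a (hA'A h1) with h | h
    · exact absurd h h3
    · exact ⟨h1, h3, h⟩
  have hA1A2 : A₁ ∪ A₂ = A' := by
    apply Finset.union_sdiff_of_subset
    exact Finset.filter_subset _ _
  -- undominated private neighbors of v₁ and v₂
  obtain ⟨u₁, hu₁mem, hu₁ncl⟩ := Set.not_subset.1 hnd1
  obtain ⟨u₂, hu₂mem, hu₂ncl⟩ := Set.not_subset.1 hnd2
  have hu₁A : u₁ ∈ A := (hAmem u₁).2 ⟨hu₁mem.2, hu₁ncl⟩
  have hu₂A : u₂ ∈ A := (hAmem u₂).2 ⟨hu₂mem.2, hu₂ncl⟩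
  have hu₁adj : G.Adj v₁ u₁ := hu₁mem.1
  have hu₂adj : G.Adj v₂ u₂ := hu₂mem.1
  -- a generic domination criterion
  have domAux : ∀ D : Finset V, S ⊆ D →
      (v ∈ D ∨ ∃ u ∈ D, G.Adj u v) →
      (v₁ ∈ D ∨ ∃ u ∈ D, G.Adj u v₁) →
      (v₂ ∈ D ∨ ∃ u ∈ D, G.Adj u v₂) →
      (∀ a ∈ A, a ∈ D ∨ ∃ u ∈ D, G.Adj u a) →
      Dominates G D := by
    intro D hSD hdv hdv1 hdv2 hdA x
    by_cases hxv : x = v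
    · subst hxv; exact hdv
    by_cases hx1 : x = v₁
    · subst hx1; exact hdv1
    by_cases hx2 : x = v₂
    · subst hx2; exact hdv2
    by_cases hxc : x ∈ N2closed G v
    · have hnadj : ¬ G.Adj v x := by
        intro h
        rcases hNv x h with h' | h'
        · exact hx1 h'
        · exact hx2 h'
      have hxc' : x = v ∨ G.Adj v x ∨ ∃ y, G.Adj v y ∧ G.Adj y x := hxc
      rcases hxc' with h | h | h
      · exact absurd h hxv
      · exact absurd h hnadj
      · have hxopen : x ∈ N2open G v := ⟨h, hxv, hnadj⟩
        by_cases hxcl : x ∈ closedNbhdSet G S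
        · have hxcl' : x ∈ S ∨ ∃ s ∈ S, G.Adj s x := hxcl
          rcases hxcl' with h' | ⟨s, hs, h'⟩
          · exact Or.inl (hSD h')
          · exact Or.inr ⟨s, hSD hs, h'⟩
        · exact hdA x ((hAmem x).2 ⟨hxopen, hxcl⟩)
    · rcases hSdom x hxc with h | ⟨s, hs, h⟩
      · exact Or.inl (hSD h)
      · exact Or.inr ⟨s, hSD hs, h⟩
  -- useful distinctness facts
  have hA_ne_v1 : ∀ a ∈ A, a ≠ v₁ := by
    intro a ha h
    exact hA_nadj_v a ha (h ▸ hvv1)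
  have hA_ne_v2 : ∀ a ∈ A, a ≠ v₂ := by
    intro a ha h
    exact hA_nadj_v a ha (h ▸ hvv2)
  have hv1_nS : v₁ ∉ S := fun h => hSdisj v₁ h (Or.inr (Or.inl hvv1))
  have hv2_nS : v₂ ∉ S := fun h => hSdisj v₂ h (Or.inr (Or.inl hvv2))
  have hv_nS : v ∉ S := fun h => hS_ne_v v h rfl
  -- the four minimal dominating sets
  let D₀ : Finset V := insert v ((S ∪ A₁) ∪ A₂)
  let D₁ : Finset V := insert v₁ (S ∪ A₂)
  let D₂ : Finset V := insert v₂ (S ∪ A₁)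
  let D₃ : Finset V := insert v₁ (insert v₂ S)
  have hD0mem : ∀ x, x ∈ D₀ ↔ (x = v ∨ x ∈ S ∨ x ∈ A') := by
    intro x
    simp only [D₀, Finset.mem_insert, Finset.mem_union, ← hA1A2, Finset.mem_union]
    tauto
  have hD1mem : ∀ x, x ∈ D₁ ↔ (x = v₁ ∨ x ∈ S ∨ x ∈ A₂) := by
    intro x; simp [D₁]
  have hD2mem : ∀ x, x ∈ D₂ ↔ (x = v₂ ∨ x ∈ S ∨ x ∈ A₁) := by
    intro x; simp [D₂]
  have hD3mem : ∀ x, x ∈ D₃ ↔ (x = v₁ ∨ x = v₂ ∨ x ∈ S) := by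
    intro x; simp [D₃]
  -- D₀ is independent and dominating
  have hdom0 : Dominates G D₀ := by
    apply domAux
    · intro s hs; exact (hD0mem s).2 (Or.inr (Or.inl hs))
    · exact Or.inl ((hD0mem v).2 (Or.inl rfl))
    · exact Or.inr ⟨v, (hD0mem v).2 (Or.inl rfl), hvv1⟩
    · exact Or.inr ⟨v, (hD0mem v).2 (Or.inl rfl), hvv2⟩
    · intro a ha
      by_cases h : a ∈ A'
      · exact Or.inl ((hD0mem a).2 (Or.inr (Or.inr h)))
      · obtain ⟨b, hb, hba⟩ := hA'max a ha h
        exact Or.inr ⟨b, (hD0mem b).2 (Or.inr (Or.inr hb)), hba⟩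
  have hind0 : IsIndepSet G D₀ := by
    intro a ha b hb hab
    rcases (hD0mem a).1 ha with ha' | ha' | ha' <;> rcases (hD0mem b).1 hb with hb' | hb' | hb'
    · subst ha'; subst hb'; exact G.irrefl hab
    · subst ha'; exact hS_nadj_v b hb' hab
    · subst ha'; exact hA_nadj_v b (hA'A hb') hab
    · subst hb'; exact hS_nadj_v a ha' hab.symm
    · exact hSindep a ha' b hb' hab
    · exact hA_nadj_S b (hA'A hb') a ha' hab
    · subst hb'; exact hA_nadj_v a (hA'A ha') hab.symm
    · exact hA_nadj_S a (hA'A ha') b hb' hab.symm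
    · exact hA'ind a ha' b hb' hab
  -- D₁ is independent and dominating
  have hdom1 : Dominates G D₁ := by
    apply domAux
    · intro s hs; exact (hD1mem s).2 (Or.inr (Or.inl hs))
    · exact Or.inr ⟨v₁, (hD1mem v₁).2 (Or.inl rfl), hvv1.symm⟩
    · exact Or.inl ((hD1mem v₁).2 (Or.inl rfl))
    · exact Or.inr ⟨v₁, (hD1mem v₁).2 (Or.inl rfl), htri⟩
    · intro a ha
      by_cases h1 : G.Adj v₁ a
      · exact Or.inr ⟨v₁, (hD1mem v₁).2 (Or.inl rfl), h1⟩
      · have ha2 : G.Adj v₂ a := (hA_adj a ha).resolve_left h1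
        by_cases h : a ∈ A'
        · have : a ∈ A₂ := Finset.mem_sdiff.2 ⟨h, fun hh => h1 ((hA1mem a).1 hh).2⟩
          exact Or.inl ((hD1mem a).2 (Or.inr (Or.inr this)))
        · obtain ⟨b, hb, hba⟩ := hA'max a ha h
          by_cases hb1 : G.Adj v₁ b
          · exfalso
            exact aux_c4 hC4 hb1 hba ha2.symm htri.symm
              (Ne.symm (hA_ne_v1 a ha)) (hA_ne_v2 b (hA'A hb))
          · have : b ∈ A₂ := Finset.mem_sdiff.2 ⟨hb, fun hh => hb1 ((hA1mem b).1 hh).2⟩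
            exact Or.inr ⟨b, (hD1mem b).2 (Or.inr (Or.inr this)), hba⟩
  have hind1 : IsIndepSet G D₁ := by
    intro a ha b hb hab
    rcases (hD1mem a).1 ha with ha' | ha' | ha' <;> rcases (hD1mem b).1 hb with hb' | hb' | hb'
    · subst ha'; subst hb'; exact G.irrefl hab
    · subst ha'; exact hS_nadj_v1 b hb' hab
    · subst ha'; exact (hA2mem b hb').2.1 hab
    · subst hb'; exact hS_nadj_v1 a ha' hab.symm
    · exact hSindep a ha' b hb' hab
    · exact hA_nadj_S b (hA'A (hA2mem b hb').1) a ha' hab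
    · subst hb'; exact (hA2mem a ha').2.1 hab.symm
    · exact hA_nadj_S a (hA'A (hA2mem a ha').1) b hb' hab.symm
    · exact hA'ind a (hA2mem a ha').1 b (hA2mem b hb').1 hab
  -- D₂ is independent and dominating
  have hdom2 : Dominates G D₂ := by
    apply domAux
    · intro s hs; exact (hD2mem s).2 (Or.inr (Or.inl hs))
    · exact Or.inr ⟨v₂, (hD2mem v₂).2 (Or.inl rfl), hvv2.symm⟩
    · exact Or.inr ⟨v₂, (hD2mem v₂).2 (Or.inl rfl), htri.symm⟩
    · exact Or.inl ((hD2mem v₂).2 (Or.inl rfl))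
    · intro a ha
      by_cases h2 : G.Adj v₂ a
      · exact Or.inr ⟨v₂, (hD2mem v₂).2 (Or.inl rfl), h2⟩
      · have ha1 : G.Adj v₁ a := (hA_adj a ha).resolve_right h2
        by_cases h : a ∈ A'
        · have : a ∈ A₁ := (hA1mem a).2 ⟨h, ha1⟩
          exact Or.inl ((hD2mem a).2 (Or.inr (Or.inr this)))
        · obtain ⟨b, hb, hba⟩ := hA'max a ha h
          by_cases hb1 : G.Adj v₁ b
          · have : b ∈ A₁ := (hA1mem b).2 ⟨hb, hb1⟩
            exact Or.inr ⟨b, (hD2mem b).2 (Or.inr (Or.inr this)), hba⟩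
          · exfalso
            have hb2 : G.Adj v₂ b := (hA_adj b (hA'A hb)).resolve_left hb1
            exact aux_c4 hC4 ha1 hba.symm hb2.symm htri.symm
              (Ne.symm (hA_ne_v1 b (hA'A hb))) (hA_ne_v2 a ha)
  have hind2 : IsIndepSet G D₂ := by
    intro a ha b hb hab
    rcases (hD2mem a).1 ha with ha' | ha' | ha' <;> rcases (hD2mem b).1 hb with hb' | hb' | hb'
    · subst ha'; subst hb'; exact G.irrefl hab
    · subst ha'; exact hS_nadj_v2 b hb' hab
    · subst ha'
      exact hnotboth b (hA_ne_v b (hA'A ((hA1mem b).1 hb').1)) ((hA1mem b).1 hb').2 hab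
    · subst hb'; exact hS_nadj_v2 a ha' hab.symm
    · exact hSindep a ha' b hb' hab
    · exact hA_nadj_S b (hA'A ((hA1mem b).1 hb').1) a ha' hab
    · subst hb'
      exact hnotboth a (hA_ne_v a (hA'A ((hA1mem a).1 ha').1)) ((hA1mem a).1 ha').2 hab.symm
    · exact hA_nadj_S a (hA'A ((hA1mem a).1 ha').1) b hb' hab.symm
    · exact hA'ind a ((hA1mem a).1 ha').1 b ((hA1mem b).1 hb').1 hab
  -- D₃ is dominating
  have hdom3 : Dominates G D₃ := by
    apply domAux
    · intro s hs; exact (hD3mem s).2 (Or.inr (Or.inr hs))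
    · exact Or.inr ⟨v₁, (hD3mem v₁).2 (Or.inl rfl), hvv1.symm⟩
    · exact Or.inl ((hD3mem v₁).2 (Or.inl rfl))
    · exact Or.inl ((hD3mem v₂).2 (Or.inr (Or.inl rfl)))
    · intro a ha
      rcases hA_adj a ha with h | h
      · exact Or.inr ⟨v₁, (hD3mem v₁).2 (Or.inl rfl), h⟩
      · exact Or.inr ⟨v₂, (hD3mem v₂).2 (Or.inr (Or.inl rfl)), h⟩
  -- D₃ is a minimal dominating set (manual argument)
  have hmin3 : IsMinDomSet G D₃ := by
    refine ⟨hdom3, ?_⟩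
    intro T hT hTdom
    obtain ⟨x, hxD, hxT⟩ := Finset.exists_of_ssubset hT
    have hTsub := hT.subset
    rcases (hD3mem x).1 hxD with hx | hx | hx
    · -- x = v₁ : u₁ is undominated
      subst hx
      rcases hTdom u₁ with h | ⟨u, huT, hu⟩
      · rcases (hD3mem u₁).1 (hTsub h) with h' | h' | h'
        · exact hxT (h' ▸ h)
        · exact hA_ne_v2 u₁ hu₁A h'
        · exact hA_nS u₁ hu₁A h'
      · rcases (hD3mem u).1 (hTsub huT) with h' | h' | h'
        · subst h'; exact hxT huT
        · subst h'; exact hnotboth u₁ (hA_ne_v u₁ hu₁A) hu₁adj hu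
        · exact hA_nadj_S u₁ hu₁A u h' hu
    · -- x = v₂ : u₂ is undominated
      subst hx
      rcases hTdom u₂ with h | ⟨u, huT, hu⟩
      · rcases (hD3mem u₂).1 (hTsub h) with h' | h' | h'
        · exact hA_ne_v1 u₂ hu₂A h'
        · exact hxT (h' ▸ h)
        · exact hA_nS u₂ hu₂A h'
      · rcases (hD3mem u).1 (hTsub huT) with h' | h' | h'
        · subst h'; exact hnotboth u₂ (hA_ne_v u₂ hu₂A) hu hu₂adj
        · subst h'; exact hxT huT
        · exact hA_nadj_S u₂ hu₂A u h' hu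
    · -- x ∈ S : x itself is undominated
      rcases hTdom x with h | ⟨u, huT, hu⟩
      · exact hxT h
      · rcases (hD3mem u).1 (hTsub huT) with h' | h' | h'
        · subst h'; exact hS_nadj_v1 x hx hu
        · subst h'; exact hS_nadj_v2 x hx hu
        · exact hSindep u h' x hx hu
  have hmin0 := aux_indep_dom_min G D₀ hind0 hdom0
  have hmin1 := aux_indep_dom_min G D₁ hind1 hdom1
  have hmin2 := aux_indep_dom_min G D₂ hind2 hdom2
  -- weights
  have hSA' : Disjoint S A' := by
    rw [Finset.disjoint_left]
    intro a ha ha'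
    exact hA_nS a (hA'A ha') ha
  have hSA1 : Disjoint S A₁ := hSA'.mono_right (Finset.filter_subset _ _)
  have hSA2 : Disjoint S A₂ := hSA'.mono_right (Finset.sdiff_subset)
  have hA12 : Disjoint A₁ A₂ := Finset.disjoint_sdiff
  have hv_nA' : ∀ a ∈ A', a ≠ v := fun a ha => hA_ne_v a (hA'A ha)
  have sum0 : ∑ u ∈ D₀, w u = w v + ((∑ u ∈ S, w u + ∑ u ∈ A₁, w u) + ∑ u ∈ A₂, w u) := by
    have hv0 : v ∉ (S ∪ A₁) ∪ A₂ := by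
      simp only [Finset.mem_union]
      rintro ((h | h) | h)
      · exact hv_nS h
      · exact hv_nA' v ((hA1mem v).1 h).1 rfl
      · exact hv_nA' v (hA2mem v h).1 rfl
    rw [Finset.sum_insert hv0, Finset.sum_union (Finset.disjoint_union_left.2 ⟨hSA2, hA12⟩),
      Finset.sum_union hSA1]
  have sum1 : ∑ u ∈ D₁, w u = w v₁ + (∑ u ∈ S, w u + ∑ u ∈ A₂, w u) := by
    have hv10 : v₁ ∉ S ∪ A₂ := by
      simp only [Finset.mem_union]
      rintro (h | h)
      · exact hv1_nS h
      · exact hA_ne_v1 v₁ (hA'A (hA2mem v₁ h).1) rfl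
    rw [Finset.sum_insert hv10, Finset.sum_union hSA2]
  have sum2 : ∑ u ∈ D₂, w u = w v₂ + (∑ u ∈ S, w u + ∑ u ∈ A₁, w u) := by
    have hv20 : v₂ ∉ S ∪ A₁ := by
      simp only [Finset.mem_union]
      rintro (h | h)
      · exact hv2_nS h
      · exact hA_ne_v2 v₂ (hA'A ((hA1mem v₂).1 h).1) rfl
    rw [Finset.sum_insert hv20, Finset.sum_union hSA1]
  have sum3 : ∑ u ∈ D₃, w u = w v₁ + (w v₂ + ∑ u ∈ S, w u) := by
    have h1 : v₁ ∉ insert v₂ S := by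
      simp only [Finset.mem_insert]
      rintro (h | h)
      · exact hv1_ne_v2 h
      · exact hv1_nS h
    rw [Finset.sum_insert h1, Finset.sum_insert hv2_nS]
  have e1 := hwwd D₀ D₁ hmin0 hmin1
  have e2 := hwwd D₂ D₃ hmin2 hmin3
  rw [sum0, sum1] at e1
  rw [sum2, sum3] at e2
  linarith
end

section
/- If {N[x_i] : 1 ≤ i ≤ k} is a partition of V(G) for simplicial vertices x₁,…,x_k, and w : V(G) → ℝ satisfies that w is constant on each clique N[x_i] restricted to the vertices that can appear in minimal dominating sets—specifically, if every vertex u ∈ N[x_i] satisfies w(u) = w(x_i)—then G is w-well-dominated with every minimal dominating set of weight Σ_i w(x_i). -/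
/-- If the closed neighborhoods of simplicial vertices partition `V(G)` and `w` is constant
on each closed neighborhood `N[x i]` (equal to `w (x i)`), then `G` is `w`-well-dominated
and every minimal dominating set has weight `∑ i, w (x i)`. -/
theorem wwd_of_simplicial_partition_const_weights {V : Type*} [Fintype V] [DecidableEq V]
    (G : SimpleGraph V) (k : ℕ) (x : Fin k → V)
    (hsimp : ∀ i, Simplicial G (x i))
    (hpart : ∀ v : V, ∃! i : Fin k, v ∈ closedNbhd G (x i))
    (w : V → ℝ) (hw : ∀ i : Fin k, ∀ u ∈ closedNbhd G (x i), w u = w (x i)) :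
    (∀ S : Finset V, IsMinDomSet G S → (∑ v ∈ S, w v) = ∑ i : Fin k, w (x i)) ∧
    (∀ S T : Finset V, IsMinDomSet G S → IsMinDomSet G T →
      (∑ v ∈ S, w v) = (∑ v ∈ T, w v)) := by
  have clique : ∀ (j : Fin k), ∀ a ∈ closedNbhd G (x j), ∀ b ∈ closedNbhd G (x j),
      a = b ∨ G.Adj a b := by
    intro j a ha b hb
    by_cases h : a = b
    · exact Or.inl h
    · exact Or.inr (hsimp j a ha b hb h)
  have key : ∀ S : Finset V, IsMinDomSet G S → (∑ v ∈ S, w v) = ∑ i : Fin k, w (x i) := by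
    intro S hS
    obtain ⟨hdom, hmin⟩ := hS
    -- existence of a vertex of S in each closed neighborhood
    have hex : ∀ i : Fin k, ∃ s, s ∈ S ∧ s ∈ closedNbhd G (x i) := by
      intro i
      rcases hdom (x i) with h | ⟨u, hu, hadj⟩
      · exact ⟨x i, h, Or.inl rfl⟩
      · exact ⟨u, hu, Or.inr hadj.symm⟩
    -- private neighbors
    have hpriv : ∀ u ∈ S, ∃ z, (z = u ∨ G.Adj u z) ∧
        ∀ s ∈ S, s ≠ u → ¬(z = s ∨ G.Adj s z) := by
      intro u hu
      have hss : S.erase u ⊂ S := Finset.erase_ssubset hu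
      have hnd := hmin _ hss
      simp only [Dominates, not_forall, not_or, not_exists] at hnd
      obtain ⟨z, hz1, hz2⟩ := hnd
      have hz2' : ∀ s ∈ S, s ≠ u → ¬ G.Adj s z := by
        intro s hs hsu
        exact fun hadj => hz2 s ⟨Finset.mem_erase.mpr ⟨hsu, hs⟩, hadj⟩
      have hzS : z = u ∨ G.Adj u z := by
        rcases hdom z with h | ⟨s, hs, hadj⟩
        · left
          by_contra hne
          exact hz1 (Finset.mem_erase.mpr ⟨hne, h⟩)
        · by_cases hsu : s = u
          · exact Or.inr (hsu ▸ hadj)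
          · exact absurd hadj (hz2' s hs hsu)
      refine ⟨z, hzS, ?_⟩
      intro s hs hsu hc
      rcases hc with rfl | hadj
      · exact hz1 (Finset.mem_erase.mpr ⟨hsu, hs⟩)
      · exact hz2' s hs hsu hadj
    -- uniqueness
    have huniq : ∀ i : Fin k, ∀ a ∈ S, ∀ b ∈ S,
        a ∈ closedNbhd G (x i) → b ∈ closedNbhd G (x i) → a = b := by
      intro i a ha b hb hai hbi
      by_contra hne
      obtain ⟨z, hz1, hz2⟩ := hpriv a ha
      obtain ⟨j, hzj, _⟩ := hpart z
      obtain ⟨s, hsS, hsj⟩ := hex j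
      have hdz : z = s ∨ G.Adj s z := by
        rcases clique j s hsj z hzj with h | h
        · exact Or.inl h.symm
        · exact Or.inr h
      have hsa : s = a := by
        by_contra hsa
        exact hz2 s hsS hsa hdz
      have haj : a ∈ closedNbhd G (x j) := hsa ▸ hsj
      have hij : j = i := by
        obtain ⟨c, _, hcu⟩ := hpart a
        rw [hcu j haj, hcu i hai]
      have hzi : z ∈ closedNbhd G (x i) := hij ▸ hzj
      have hdb : z = b ∨ G.Adj b z := by
        rcases clique i b hbi z hzi with h | h
        · exact Or.inl h.symm
        · exact Or.inr h
      exact hz2 b hb (fun h => hne h.symm) hdb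
    -- the bijection
    refine (Finset.sum_bij (fun (i : Fin k) (_ : i ∈ Finset.univ) =>
        Classical.choose (hex i)) ?_ ?_ ?_ ?_).symm
    · intro i _
      exact (Classical.choose_spec (hex i)).1
    · intro i _ j _ hij
      have hi := (Classical.choose_spec (hex i)).2
      have hj := (Classical.choose_spec (hex j)).2
      have hij' : Classical.choose (hex i) = Classical.choose (hex j) := hij
      rw [hij'] at hi
      obtain ⟨c, _, hcu⟩ := hpart (Classical.choose (hex j))
      rw [hcu i hi, hcu j hj]
    · intro b hb
      obtain ⟨j, hbj, _⟩ := hpart b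
      refine ⟨j, Finset.mem_univ j, ?_⟩
      exact huniq j _ (Classical.choose_spec (hex j)).1 b hb
        (Classical.choose_spec (hex j)).2 hbj
    · intro i _
      exact (hw i _ (Classical.choose_spec (hex i)).2).symm
  exact ⟨key, fun S T hS hT => (key S hS).trans (key T hT).symm⟩
end
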